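/- For all integers m, n ≥ 0, gcd(41^m − 34^n, 105) > 1; indeed 3 divides 41^m − 34^n whenever m is even, 5 divides 41^m − 34^n whenever n is even, and 7 divides 41^m − 34^n whenever m ≡ n (mod 2). -/

import Mathlib

lemma aux3 (m n : ℕ) (h : 2 ∣ m) : (3 : ℤ) ∣ (41 : ℤ) ^ m - (34 : ℤ) ^ n := by
  obtain ⟨k, rfl⟩ := h
  apply (ZMod.intCast_zmod_eq_zero_iff_dvd _ 3).mp
  push_cast
  rw [pow_mul, show ((41:ZMod 3)^2) = 1 by decide, show ((34:ZMod 3)) = 1 by decide]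
  simp

lemma aux5 (m n : ℕ) (h : 2 ∣ n) : (5 : ℤ) ∣ (41 : ℤ) ^ m - (34 : ℤ) ^ n := by
  obtain ⟨k, rfl⟩ := h
  apply (ZMod.intCast_zmod_eq_zero_iff_dvd _ 5).mp
  push_cast
  rw [pow_mul]
  rw [show ((34:ZMod 5)^2) = 1 by decide, show ((41:ZMod 5)) = 1 by decide]
  simp

lemma aux7 (m n : ℕ) (h : m ≡ n [MOD 2]) : (7 : ℤ) ∣ (41 : ℤ) ^ m - (34 : ℤ) ^ n := by
  apply (ZMod.intCast_zmod_eq_zero_iff_dvd _ 7).mp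
  push_cast
  rw [show ((41:ZMod 7)) = -1 by decide, show ((34:ZMod 7)) = -1 by decide]
  rcases Nat.even_or_odd m with hm | hm
  · have hn : Even n := (Nat.even_iff.mpr (h ▸ Nat.even_iff.mp hm))
    rw [hm.neg_one_pow, hn.neg_one_pow]; ring
  · have hn : Odd n := Nat.odd_iff.mpr (h ▸ Nat.odd_iff.mp hm)
    rw [hm.neg_one_pow, hn.neg_one_pow]; ring

/-- For all `m, n ≥ 0`, `gcd(41^m - 34^n, 105) > 1`; indeed `3 ∣ 41^m - 34^n` when
`m` is even, `5 ∣ 41^m - 34^n` when `n` is even, and `7 ∣ 41^m - 34^n` when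
`m ≡ n (mod 2)`. -/
theorem covering_example_41_34 :
    ∀ m n : ℕ,
      1 < Int.gcd ((41 : ℤ) ^ m - (34 : ℤ) ^ n) 105 ∧
      (2 ∣ m → (3 : ℤ) ∣ (41 : ℤ) ^ m - (34 : ℤ) ^ n) ∧
      (2 ∣ n → (5 : ℤ) ∣ (41 : ℤ) ^ m - (34 : ℤ) ^ n) ∧
      (m ≡ n [MOD 2] → (7 : ℤ) ∣ (41 : ℤ) ^ m - (34 : ℤ) ^ n) := by
  intro m n
  refine ⟨?_, aux3 m n, aux5 m n, aux7 m n⟩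
  have key : ∃ p : ℤ, 1 < p ∧ p ∣ (41 : ℤ) ^ m - (34 : ℤ) ^ n ∧ p ∣ 105 := by
    rcases Nat.even_or_odd m with hm | hm
    · exact ⟨3, by norm_num, aux3 m n hm.two_dvd, by norm_num⟩
    · rcases Nat.even_or_odd n with hn | hn
      · exact ⟨5, by norm_num, aux5 m n hn.two_dvd, by norm_num⟩
      · refine ⟨7, by norm_num, aux7 m n ?_, by norm_num⟩
        unfold Nat.ModEq
        rw [Nat.odd_iff.mp hm, Nat.odd_iff.mp hn]
  obtain ⟨p, hp1, hpd, hp105⟩ := key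
  have hdvd : p ∣ (Int.gcd ((41 : ℤ) ^ m - (34 : ℤ) ^ n) 105 : ℤ) :=
    Int.dvd_coe_gcd hpd hp105
  have hpos : 0 < Int.gcd ((41 : ℤ) ^ m - (34 : ℤ) ^ n) 105 := by
    apply Int.gcd_pos_of_ne_zero_right; norm_num
  have := Int.le_of_dvd (by exact_mod_cast hpos) hdvd
  omega
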